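/- For the classical Desboves map f₀(x:y:z) = (x(y³−z³) : y(z³−x³) : z(x³−y³)), the rational function η = (x³+y³+z³)/(3xyz) is a first integral: η(f₀(x:y:z)) = η(x:y:z) wherever both sides are defined. -/
import Mathlib


/-- `Φ(x,y,z) = x³ + y³ + z³`. -/
noncomputable def fermatPhi (x y z : ℂ) : ℂ := x ^ 3 + y ^ 3 + z ^ 3

/-- The classical Desboves map `f₀(x:y:z) = (x(y³−z³) : y(z³−x³) : z(x³−y³))`,
written on homogeneous representatives in `ℂ³`. -/
noncomputable def desbovesF0 (x y z : ℂ) : ℂ × ℂ × ℂ :=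
  (x * (y ^ 3 - z ^ 3), y * (z ^ 3 - x ^ 3), z * (x ^ 3 - y ^ 3))

/-- **First integral of the classical Desboves map** (§3).
The rational function `η = (x³+y³+z³)/(3xyz)` satisfies `η(f₀(x:y:z)) = η(x:y:z)` wherever
both sides are defined.  On homogeneous representatives this is the cross-multiplied
polynomial identity `Φ(f₀(v))·3xyz = Φ(v)·3XYZ`, together with the equality of the two
ratios whenever both denominators are nonzero. -/
theorem desboves_first_integral (x y z : ℂ) :
    fermatPhi (desbovesF0 x y z).1 (desbovesF0 x y z).2.1 (desbovesF0 x y z).2.2 *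
        (3 * x * y * z) =
      fermatPhi x y z *
        (3 * (desbovesF0 x y z).1 * (desbovesF0 x y z).2.1 * (desbovesF0 x y z).2.2) ∧
    (3 * x * y * z ≠ 0 →
      3 * (desbovesF0 x y z).1 * (desbovesF0 x y z).2.1 * (desbovesF0 x y z).2.2 ≠ 0 →
      fermatPhi (desbovesF0 x y z).1 (desbovesF0 x y z).2.1 (desbovesF0 x y z).2.2 /
          (3 * (desbovesF0 x y z).1 * (desbovesF0 x y z).2.1 * (desbovesF0 x y z).2.2) =
        fermatPhi x y z / (3 * x * y * z)) := by
  have h : fermatPhi (desbovesF0 x y z).1 (desbovesF0 x y z).2.1 (desbovesF0 x y z).2.2 *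
        (3 * x * y * z) =
      fermatPhi x y z *
        (3 * (desbovesF0 x y z).1 * (desbovesF0 x y z).2.1 * (desbovesF0 x y z).2.2) := by
    simp only [fermatPhi, desbovesF0]; ring
  exact ⟨h, fun h1 h2 => by rw [div_eq_div_iff h2 h1]; exact h⟩
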